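/- Let K be a field of characteristic not 2 and a, b, c ∈ K^×. The ternary quadratic form a x² + b y² + c z² has a nontrivial zero over K if and only if the Hilbert-symbol-type condition holds: the quaternion algebra (−ac, −bc) over K is split (equivalently, the Hilbert symbol (−ac, −bc) = 1). -/

import Mathlib

open Quaternion

private lemma matDecomp {K : Type*} [Field K] (M : Matrix (Fin 2) (Fin 2) K) :
    M = M 0 0 • !![1, 0; 0, 0] + M 0 1 • !![0, 1; 0, 0]
      + M 1 0 • !![0, 0; 1, 0] + M 1 1 • !![0, 0; 0, 1] := by
  ext i j
  fin_cases i <;> fin_cases j <;>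
    simp [Matrix.add_apply, Matrix.smul_apply]

private def mkBasis (K : Type*) [Field K] (α β u v : K) (huv : u ^ 2 - α * v ^ 2 = β) :
    QuaternionAlgebra.Basis (Matrix (Fin 2) (Fin 2) K) α 0 β where
  i := !![0, 1; α, 0]
  j := !![u, v; -v * α, -u]
  k := !![0, 1; α, 0] * !![u, v; -v * α, -u]
  i_mul_i := by
    ext i j
    fin_cases i <;> fin_cases j <;>
      simp [Matrix.mul_apply, Fin.sum_univ_two, Matrix.one_apply] <;> ring
  j_mul_j := by
    ext i j
    fin_cases i <;> fin_cases j <;>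
      simp [Matrix.mul_apply, Fin.sum_univ_two, Matrix.one_apply] <;>
      (first | ring1 | linear_combination huv)
  i_mul_j := rfl
  j_mul_i := by
    ext i j
    fin_cases i <;> fin_cases j <;>
      simp [Matrix.mul_apply, Fin.sum_univ_two] <;> ring

private lemma splitAux (K : Type*) [Field K] (h2 : (2 : K) ≠ 0) (α β u v : K)
    (hα : α ≠ 0) (hβ : β ≠ 0) (huv : u ^ 2 - α * v ^ 2 = β) :
    Nonempty (ℍ[K, α, β] ≃ₐ[K] Matrix (Fin 2) (Fin 2) K) := by
  set I : Matrix (Fin 2) (Fin 2) K := !![0, 1; α, 0] with hI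
  set J : Matrix (Fin 2) (Fin 2) K := !![u, v; -v * α, -u] with hJ
  set f := (mkBasis K α β u v huv).liftHom with hf
  have hfi : f ⟨0, 1, 0, 0⟩ = I := by
    show (mkBasis K α β u v huv).lift _ = I
    simp [QuaternionAlgebra.Basis.lift, mkBasis, hI]
  have hfj : f ⟨0, 0, 1, 0⟩ = J := by
    show (mkBasis K α β u v huv).lift _ = J
    simp [QuaternionAlgebra.Basis.lift, mkBasis, hJ]
  have hIr : I ∈ f.range := ⟨⟨0, 1, 0, 0⟩, hfi⟩
  have hJr : J ∈ f.range := ⟨⟨0, 0, 1, 0⟩, hfj⟩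
  have hKr : I * J ∈ f.range := mul_mem hIr hJr
  have hD : (!![1, 0; 0, -1] : Matrix (Fin 2) (Fin 2) K) ∈ f.range := by
    have key : u • J + v • (I * J) = β • !![1, 0; 0, -1] := by
      ext i j
      fin_cases i <;> fin_cases j <;>
        simp [hI, hJ, Matrix.mul_apply, Fin.sum_univ_two, Matrix.add_apply,
          Matrix.smul_apply] <;>
        (first | ring1 | linear_combination huv | linear_combination -huv)
    have hDeq : (!![1, 0; 0, -1] : Matrix (Fin 2) (Fin 2) K)
        = β⁻¹ • (u • J + v • (I * J)) := by
      rw [key, smul_smul, inv_mul_cancel₀ hβ, one_smul]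
    rw [hDeq]
    exact Subalgebra.smul_mem _ (add_mem (Subalgebra.smul_mem _ hJr _)
      (Subalgebra.smul_mem _ hKr _)) _
  have hE11 : (!![1, 0; 0, 0] : Matrix (Fin 2) (Fin 2) K) ∈ f.range := by
    have heq : (!![1, 0; 0, 0] : Matrix (Fin 2) (Fin 2) K)
        = (2 : K)⁻¹ • (1 + !![1, 0; 0, -1]) := by
      ext i j
      fin_cases i <;> fin_cases j <;>
        simp [Matrix.one_apply, Matrix.add_apply, Matrix.smul_apply] <;>
        field_simp <;> norm_num
    rw [heq]
    exact Subalgebra.smul_mem _ (add_mem (one_mem _) hD) _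
  have hE22 : (!![0, 0; 0, 1] : Matrix (Fin 2) (Fin 2) K) ∈ f.range := by
    have heq : (!![0, 0; 0, 1] : Matrix (Fin 2) (Fin 2) K) = 1 - !![1, 0; 0, 0] := by
      ext i j
      fin_cases i <;> fin_cases j <;> simp [Matrix.one_apply, Matrix.sub_apply]
    rw [heq]
    exact sub_mem (one_mem _) hE11
  have hE12 : (!![0, 1; 0, 0] : Matrix (Fin 2) (Fin 2) K) ∈ f.range := by
    have heq : (!![0, 1; 0, 0] : Matrix (Fin 2) (Fin 2) K) = !![1, 0; 0, 0] * I := by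
      ext i j
      fin_cases i <;> fin_cases j <;>
        simp [hI, Matrix.mul_apply, Fin.sum_univ_two]
    rw [heq]
    exact mul_mem hE11 hIr
  have hE21 : (!![0, 0; 1, 0] : Matrix (Fin 2) (Fin 2) K) ∈ f.range := by
    have heq : (!![0, 0; 1, 0] : Matrix (Fin 2) (Fin 2) K)
        = α⁻¹ • (I * !![1, 0; 0, 0]) := by
      ext i j
      fin_cases i <;> fin_cases j <;>
        simp [hI, Matrix.mul_apply, Fin.sum_univ_two, Matrix.smul_apply,
          inv_mul_cancel₀ hα]
    rw [heq]
    exact Subalgebra.smul_mem _ (mul_mem hIr hE11) _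
  have hsurj : Function.Surjective f := by
    intro M
    have hM : M ∈ f.range := by
      rw [matDecomp M]
      exact add_mem (add_mem (add_mem (Subalgebra.smul_mem _ hE11 _)
        (Subalgebra.smul_mem _ hE12 _)) (Subalgebra.smul_mem _ hE21 _))
        (Subalgebra.smul_mem _ hE22 _)
    exact hM
  have hfr : Module.finrank K ℍ[K, α, β]
      = Module.finrank K (Matrix (Fin 2) (Fin 2) K) := by
    rw [QuaternionAlgebra.finrank_eq_four, Module.finrank_matrix]
    simp
  have hinj : Function.Injective f :=
    (LinearMap.injective_iff_surjective_of_finrank_eq_finrank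
      (f := f.toLinearMap) hfr).mpr hsurj
  exact ⟨AlgEquiv.ofBijective f ⟨hinj, hsurj⟩⟩

/-- over a field `K` of characteristic `≠ 2`, for `a, b, c ∈ K^×` the
ternary quadratic form `a x² + b y² + c z²` is isotropic (has a nontrivial zero) if and
only if the quaternion algebra `(-ac, -bc)` over `K` is split, i.e. isomorphic to the
algebra of `2 × 2` matrices over `K` (equivalently, the Hilbert symbol `(-ac, -bc) = 1`). -/
theorem stmt4 (K : Type*) [Field K] (hchar : (2 : K) ≠ 0) (a b c : K)
    (ha : a ≠ 0) (hb : b ≠ 0) (hc : c ≠ 0) :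
    (∃ x y z : K, (x, y, z) ≠ (0, 0, 0) ∧ a * x ^ 2 + b * y ^ 2 + c * z ^ 2 = 0) ↔
      Nonempty (ℍ[K, -(a * c), -(b * c)] ≃ₐ[K] Matrix (Fin 2) (Fin 2) K) := by
  have hα : -(a * c) ≠ 0 := neg_ne_zero.mpr (mul_ne_zero ha hc)
  have hβ : -(b * c) ≠ 0 := neg_ne_zero.mpr (mul_ne_zero hb hc)
  constructor
  · rintro ⟨x, y, z, hnt, h⟩
    have hnt' : ¬(x = 0 ∧ y = 0 ∧ z = 0) := by
      intro h'
      exact hnt (by simp [h'.1, h'.2.1, h'.2.2])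
    by_cases hy : y = 0
    · have hx : x ≠ 0 := by
        intro hx
        have hcz : c * z ^ 2 = 0 := by
          rw [hx, hy] at h; linear_combination h
        have hz : z = 0 :=
          pow_eq_zero_iff (n := 2) (by norm_num) |>.mp
            ((mul_eq_zero.mp hcz).resolve_left hc)
        exact hnt' ⟨hx, hy, hz⟩
      have hz : z ≠ 0 := by
        intro hz
        have hax : a * x ^ 2 = 0 := by rw [hy, hz] at h; linear_combination h
        exact hnt' ⟨pow_eq_zero_iff (n := 2) (by norm_num) |>.mp
          ((mul_eq_zero.mp hax).resolve_left ha), hy, hz⟩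
      set d := c * z / x with hd
      have hdne : d ≠ 0 := div_ne_zero (mul_ne_zero hc hz) hx
      have h' : a * x ^ 2 + c * z ^ 2 = 0 := by rw [hy] at h; linear_combination h
      have hsq : -(a * c) = d ^ 2 := by
        rw [hd]
        field_simp
        linear_combination (-1 : K) * h'
      refine splitAux K hchar _ _ ((-(b * c) + 1) / 2) ((1 - -(b * c)) / (2 * d)) hα hβ ?_
      rw [hsq]
      field_simp
      ring
    · refine splitAux K hchar _ _ (c * z / y) (x / y) hα hβ ?_
      field_simp
      linear_combination h
  · rintro ⟨φ⟩
    set M : Matrix (Fin 2) (Fin 2) K := !![0, 1; 0, 0] with hM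
    set q := φ.symm M with hq
    have hMM : M * M = 0 := by
      ext i j
      fin_cases i <;> fin_cases j <;> simp [hM, Matrix.mul_apply, Fin.sum_univ_two]
    have hq0 : q ≠ 0 := by
      intro h0
      have hM0 : M = 0 := by
        have h1 := congrArg φ h0
        simpa [hq] using h1
      have h2 := congrFun (congrFun hM0 0) 1
      simp [hM] at h2
    have hqq : q * q = 0 := by
      rw [hq, ← map_mul, hMM, map_zero]
    set t := q.re with hqt; set x := q.imI with hqx
    set y := q.imJ with hqy; set z := q.imK with hqz
    have hre : t * t + (-(a * c)) * x * x + (-(b * c)) * y * y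
        - (-(a * c)) * (-(b * c)) * z * z = 0 := by
        have h := congrArg QuaternionAlgebra.re hqq
        simp only [QuaternionAlgebra.re_mul, QuaternionAlgebra.re_zero] at h
        linear_combination h
    have himI : t * x + x * t - (-(b * c)) * y * z + (-(b * c)) * z * y = 0 :=
      by
        have h := congrArg QuaternionAlgebra.imI hqq
        simp only [QuaternionAlgebra.imI_mul, QuaternionAlgebra.imI_zero] at h
        linear_combination h
    have himJ : t * y + (-(a * c)) * x * z + y * t - (-(a * c)) * z * x = 0 :=
      by
        have h := congrArg QuaternionAlgebra.imJ hqq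
        simp only [QuaternionAlgebra.imJ_mul, QuaternionAlgebra.imJ_zero] at h
        linear_combination h
    have himK : t * z + x * y - y * x + z * t = 0 :=
      by
        have h := congrArg QuaternionAlgebra.imK hqq
        simp only [QuaternionAlgebra.imK_mul, QuaternionAlgebra.imK_zero] at h
        linear_combination h
    have ht : t = 0 := by
      by_contra ht
      have h2t : (2 : K) * t ≠ 0 := mul_ne_zero hchar ht
      have hx0 : x = 0 := by
        have hh : (2 * t) * x = 0 := by linear_combination himI
        exact (mul_eq_zero.mp hh).resolve_left h2t
      have hy0 : y = 0 := by
        have hh : (2 * t) * y = 0 := by linear_combination himJ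
        exact (mul_eq_zero.mp hh).resolve_left h2t
      have hz0 : z = 0 := by
        have hh : (2 * t) * z = 0 := by linear_combination himK
        exact (mul_eq_zero.mp hh).resolve_left h2t
      have htt : t * t = 0 := by rw [hx0, hy0, hz0] at hre; linear_combination hre
      exact ht (mul_self_eq_zero.mp htt)
    have hxyz : ¬(x = 0 ∧ y = 0 ∧ z = 0) := by
      rintro ⟨h1, h2, h3⟩
      exact hq0 (QuaternionAlgebra.ext ht h1 h2 h3)
    refine ⟨b * y, a * x, a * b * z, ?_, ?_⟩
    · intro hP
      rw [Prod.mk.injEq, Prod.mk.injEq] at hP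
      obtain ⟨h1, h2, h3⟩ := hP
      exact hxyz ⟨(mul_eq_zero.mp h2).resolve_left ha,
        (mul_eq_zero.mp h1).resolve_left hb,
        (mul_eq_zero.mp h3).resolve_left (mul_ne_zero ha hb)⟩
    · rw [ht] at hre
      have key0 : c * (a * x ^ 2 + b * y ^ 2 + a * b * c * z ^ 2) = 0 := by
        linear_combination -hre
      have key : a * x ^ 2 + b * y ^ 2 + a * b * c * z ^ 2 = 0 :=
        (mul_eq_zero.mp key0).resolve_left hc
      linear_combination (a * b) * key
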